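/- Let (f_1,...,f_s) be a coherently Z-separating tuple in a proper ideal I of P = K[x_1,...,x_n], let σ be a term ordering with z_i = LT_σ(f_i) for i = 1,...,s, and let P̂ = K[X∖Z]. Then I has a σ-Gröbner basis of the form { (1/c_1)f_1, ..., (1/c_s)f_s, g_1, ..., g_t } where {g_1,...,g_t} is the reduced Gröbner basis of the elimination ideal I ∩ P̂ with respect to the restriction of σ to P̂. -/

import Mathlib

open MvPolynomial

/-- A term ordering on the monomials of `K[x_1,...,x_n]`: a linear order on
exponent vectors compatible with addition and with `1` as smallest term. -/
structure TermOrder (n : ℕ) where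
  le : (Fin n →₀ ℕ) → (Fin n →₀ ℕ) → Prop
  le_refl : ∀ m, le m m
  le_trans : ∀ a b c, le a b → le b c → le a c
  le_antisymm : ∀ a b, le a b → le b a → a = b
  le_total : ∀ a b, le a b ∨ le b a
  add_le_add : ∀ a b c, le a b → le (a + c) (b + c)
  zero_le : ∀ m, le 0 m

variable {K : Type*} [Field K] {n s : ℕ}

/-- `m` is the `σ`-leading term of `f`. -/
def TermOrder.IsLeadingTerm (σ : TermOrder n) (f : MvPolynomial (Fin n) K)
    (m : Fin n →₀ ℕ) : Prop :=
  m ∈ f.support ∧ ∀ m' ∈ f.support, σ.le m' m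

/-- `G` is a `σ`-Gröbner basis of the set `S` (typically an ideal or an
elimination ideal): `G ⊆ S` and the leading term of every nonzero element of `S`
is divisible by the leading term of some element of `G`. -/
def IsGBOn (σ : TermOrder n) (S G : Set (MvPolynomial (Fin n) K)) : Prop :=
  G ⊆ S ∧ ∀ f ∈ S, f ≠ 0 → ∃ g ∈ G, ∃ mg mf, σ.IsLeadingTerm g mg ∧
    σ.IsLeadingTerm f mf ∧ mg ≤ mf

/-- `G` is the reduced `σ`-Gröbner basis of `S`: a monic, fully interreduced
`σ`-Gröbner basis. -/
def IsReducedGBOn (σ : TermOrder n) (S G : Set (MvPolynomial (Fin n) K)) : Prop :=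
  IsGBOn σ S G ∧
  (∀ g ∈ G, ∃ m, σ.IsLeadingTerm g m ∧ MvPolynomial.coeff m g = 1) ∧
  (∀ g ∈ G, ∀ m ∈ g.support, ∀ g' ∈ G, ∀ m', σ.IsLeadingTerm g' m' → m' ≤ m →
    g' = g ∧ m' = m)

/-- The indeterminate `z` divides some term in the support of `f`. -/
def Occurs (z : Fin n) (f : MvPolynomial (Fin n) K) : Prop :=
  ∃ m ∈ f.support, m z ≠ 0

/-- `tail_z(f) = z - (1/c) f`, where `c` is the coefficient of `z` in `f`. -/
noncomputable def tailTo (f : MvPolynomial (Fin n) K) (z : Fin n) :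
    MvPolynomial (Fin n) K :=
  X z - (MvPolynomial.coeff (Finsupp.single z 1) f)⁻¹ • f

/-- `f` is `z`-separating: the coefficient of `z` in `f` is nonzero and `z`
divides no term in the support of `tail_z(f)`. -/
def IsSeparating (f : MvPolynomial (Fin n) K) (z : Fin n) : Prop :=
  MvPolynomial.coeff (Finsupp.single z 1) f ≠ 0 ∧ ¬ Occurs z (tailTo f z)

/-- `(f_1,...,f_s)` is coherently `Z`-separating for `Z = {z_1,...,z_s}`. -/
def CoherentlySeparating (z : Fin s → Fin n) (f : Fin s → MvPolynomial (Fin n) K) : Prop :=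
  Function.Injective z ∧ (∀ i, f i ≠ 0 ∧ IsSeparating (f i) (z i)) ∧
  ∀ i j, j ≠ i → ¬ Occurs (z i) (f j)

/-- The `M`-linear part of `f` for `M = ⟨x_1-a_1,...,x_n-a_n⟩`. -/
noncomputable def linPart (a : Fin n → K) (f : MvPolynomial (Fin n) K) :
    MvPolynomial (Fin n) K :=
  (MvPolynomial.aeval fun i => X i - C (a i))
    (MvPolynomial.homogeneousComponent 1 ((MvPolynomial.aeval fun i => X i + C (a i)) f))

/-- The `M`-linear part of an ideal `I`: the `K`-span of `{Lin_M(f) : f ∈ I}`. -/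
noncomputable def linSpace (a : Fin n → K) (I : Ideal (MvPolynomial (Fin n) K)) :
    Submodule K (MvPolynomial (Fin n) K) :=
  Submodule.span K (linPart a '' (I : Set (MvPolynomial (Fin n) K)))

/-- The linear maximal ideal `M = ⟨x_1-a_1,...,x_n-a_n⟩`. -/
noncomputable def linMaxIdeal (a : Fin n → K) : Ideal (MvPolynomial (Fin n) K) :=
  Ideal.span (Set.range fun i => X i - C (a i))

/-- `M_1`, the `K`-vector space spanned by `x_1-a_1,...,x_n-a_n`. -/
noncomputable def linForms (a : Fin n → K) : Submodule K (MvPolynomial (Fin n) K) :=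
  Submodule.span K (Set.range fun i => X i - C (a i))

/-- The elimination ideal `I ∩ K[X∖Z]`, viewed as the set of polynomials of `I`
in which no indeterminate of `Z` occurs. -/
def elimSet (z : Fin s → Fin n) (I : Ideal (MvPolynomial (Fin n) K)) :
    Set (MvPolynomial (Fin n) K) :=
  {p | p ∈ I ∧ ∀ i, ¬ Occurs (z i) p}

/-- `r` is the normal form of `p` with respect to (the reduced Gröbner basis of)
`S`: `p - r ∈ S` and no term of `r` is divisible by a leading term of `S`. -/
def IsNormalFormOn (σ : TermOrder n) (S : Set (MvPolynomial (Fin n) K))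
    (p r : MvPolynomial (Fin n) K) : Prop :=
  p - r ∈ S ∧ ∀ f ∈ S, f ≠ 0 → ∀ mf m, σ.IsLeadingTerm f mf → m ∈ r.support → ¬ mf ≤ m

/-- `σ` is a `Z`-separating term ordering for `I`. -/
def IsZSepOrder (σ : TermOrder n) (z : Fin s → Fin n)
    (I : Ideal (MvPolynomial (Fin n) K)) : Prop :=
  ∃ p : Fin s → MvPolynomial (Fin n) K,
    (∀ i, p i ∈ I ∧ p i ≠ 0 ∧ σ.IsLeadingTerm (p i) (Finsupp.single (z i) 1)) ∧
    CoherentlySeparating z p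

open Classical in
/-- The substitution `x_i ↦ x_i` for `x_i ∉ Z` and `z_j ↦ tail_{z_j}(f_j)`. -/
noncomputable def subMap (z : Fin s → Fin n) (f : Fin s → MvPolynomial (Fin n) K)
    (i : Fin n) : MvPolynomial (Fin n) K :=
  if h : ∃ j, z j = i then tailTo (f h.choose) (z h.choose) else X i

open Classical in
/-- The projection of `P` onto `P̂ = K[X∖Z]`. -/
noncomputable def killZ (z : Fin s → Fin n) :
    MvPolynomial (Fin n) K →ₐ[K] MvPolynomial {i : Fin n // ¬ ∃ j, z j = i} K :=
  MvPolynomial.aeval fun i => if h : ∃ j, z j = i then 0 else X ⟨i, h⟩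

/-- The elimination ideal `I ∩ P̂` as an ideal of `P̂ = K[X∖Z]`. -/
noncomputable def elimIdeal (z : Fin s → Fin n) (I : Ideal (MvPolynomial (Fin n) K)) :
    Ideal (MvPolynomial {i : Fin n // ¬ ∃ j, z j = i} K) :=
  Ideal.comap (MvPolynomial.rename
    (Subtype.val : {i : Fin n // ¬ ∃ j, z j = i} → Fin n)).toRingHom I

/-- The composition `ψ : P → P̂ → P̂/(I ∩ P̂)` of the substitution
`z_j ↦ tail_{z_j}(f_j)` with the canonical projection. -/
noncomputable def reembedHom (z : Fin s → Fin n) (f : Fin s → MvPolynomial (Fin n) K)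
    (I : Ideal (MvPolynomial (Fin n) K)) :
    MvPolynomial (Fin n) K →+*
      (MvPolynomial {i : Fin n // ¬ ∃ j, z j = i} K ⧸ elimIdeal z I) :=
  (Ideal.Quotient.mk (elimIdeal z I)).comp
    (((killZ z).comp (MvPolynomial.aeval (subMap z f))).toRingHom)

/-- The cotangent space `m/m²` as a `K`-vector space. -/
abbrev cotSpace (K : Type*) [Field K] {R : Type*} [CommRing R] [Algebra K R]
    (m : Ideal R) :=
  (m.restrictScalars K) ⧸
    Submodule.comap (Submodule.subtype (m.restrictScalars K)) ((m ^ 2).restrictScalars K)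

/-- The embedding dimension of an affine `K`-algebra `R`: the minimal number `m`
of indeterminates of a presentation `R ≅ K[y_1,...,y_m]/I'`. -/
noncomputable def edim (K : Type*) [Field K] (R : Type*) [CommRing R] [Algebra K R] : ℕ :=
  sInf {m | ∃ I' : Ideal (MvPolynomial (Fin m) K),
    Nonempty (R ≃ₐ[K] (MvPolynomial (Fin m) K ⧸ I'))}

/-- A marked reduced Gröbner basis of `I`: a reduced `σ`-Gröbner basis together
with the marking of the `σ`-leading term of each element. -/
def IsMarkedReducedGB (I : Ideal (MvPolynomial (Fin n) K))
    (G : Set ((Fin n →₀ ℕ) × MvPolynomial (Fin n) K)) : Prop :=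
  ∃ σ : TermOrder n, IsReducedGBOn σ (I : Set (MvPolynomial (Fin n) K)) (Prod.snd '' G) ∧
    ∀ p ∈ G, σ.IsLeadingTerm p.2 p.1

namespace TermOrder

variable {n : ℕ} (σ : TermOrder n)

lemma le_self_add (a b : Fin n →₀ ℕ) : σ.le a (a + b) := by
  have h := σ.add_le_add 0 b a (σ.zero_le b)
  simpa [add_comm] using h

lemma le_of_le {a b : Fin n →₀ ℕ} (h : a ≤ b) : σ.le a b := by
  obtain ⟨c, rfl⟩ := le_iff_exists_add.mp h
  exact σ.le_self_add a c

lemma cancel {a b c : Fin n →₀ ℕ} (h : σ.le (a + c) (b + c)) : σ.le a b := by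
  rcases σ.le_total a b with h' | h'
  · exact h'
  · have h2 := σ.add_le_add b a c h'
    have h3 := σ.le_antisymm _ _ h h2
    have h4 : a = b := add_right_cancel h3
    subst h4; exact σ.le_refl a

lemma add_le_add' {a b c d : Fin n →₀ ℕ} (h1 : σ.le a b) (h2 : σ.le c d) :
    σ.le (a + c) (b + d) := by
  have t1 := σ.add_le_add a b c h1
  have t2 := σ.add_le_add c d b h2
  rw [add_comm c b, add_comm d b] at t2
  exact σ.le_trans _ _ _ t1 t2

lemma eq_of_add_eq {a b A B : Fin n →₀ ℕ} (ha : σ.le a A) (hb : σ.le b B)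
    (h : a + b = A + B) : a = A ∧ b = B := by
  have h1 : σ.le (a + b) (A + b) := σ.add_le_add a A b ha
  rw [h] at h1
  have h2 : σ.le B b := by
    apply σ.cancel (c := A)
    rwa [add_comm B A, add_comm b A]
  have hbB : b = B := σ.le_antisymm _ _ hb h2
  subst hbB
  exact ⟨add_right_cancel h, rfl⟩

lemma exists_max (t : Finset (Fin n →₀ ℕ)) (ht : t.Nonempty) :
    ∃ m ∈ t, ∀ m' ∈ t, σ.le m' m := by
  classical
  revert ht
  induction t using Finset.induction_on with
  | empty => intro ht; exact absurd ht (by simp)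
  | @insert a t ha ih =>
    intro _
    rcases t.eq_empty_or_nonempty with rfl | ht'
    · exact ⟨a, by simp, by
        intro m' hm'
        simp only [Finset.mem_insert, Finset.notMem_empty, or_false] at hm'
        subst hm'; exact σ.le_refl _⟩
    · obtain ⟨m, hm, hmax⟩ := ih ht'
      rcases σ.le_total a m with h | h
      · refine ⟨m, Finset.mem_insert_of_mem hm, ?_⟩
        intro m' hm'
        rcases Finset.mem_insert.mp hm' with rfl | hm'
        · exact h
        · exact hmax m' hm'
      · refine ⟨a, Finset.mem_insert_self a t, ?_⟩
        intro m' hm'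
        rcases Finset.mem_insert.mp hm' with rfl | hm'
        · exact σ.le_refl m'
        · exact σ.le_trans _ _ _ (hmax m' hm') h

lemma exists_isLeadingTerm {K : Type*} [Field K] (q : MvPolynomial (Fin n) K) (hq : q ≠ 0) :
    ∃ m, σ.IsLeadingTerm q m :=
  σ.exists_max q.support (MvPolynomial.support_nonempty.mpr hq)

lemma isLeadingTerm_unique {K : Type*} [Field K] {q : MvPolynomial (Fin n) K} {m m' : Fin n →₀ ℕ}
    (h1 : σ.IsLeadingTerm q m) (h2 : σ.IsLeadingTerm q m') : m = m' :=
  σ.le_antisymm _ _ (h2.2 m h1.1) (h1.2 m' h2.1)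

lemma wf : WellFounded (fun a b : Fin n →₀ ℕ => σ.le a b ∧ a ≠ b) := by
  haveI : IsTrans (Fin n →₀ ℕ) (fun a b => σ.le a b ∧ a ≠ b) := by
    constructor
    rintro a b c ⟨hab, hab'⟩ ⟨hbc, hbc'⟩
    refine ⟨σ.le_trans _ _ _ hab hbc, ?_⟩
    rintro rfl
    exact hab' (σ.le_antisymm _ _ hab hbc)
  haveI : IsIrrefl (Fin n →₀ ℕ) (fun a b => σ.le a b ∧ a ≠ b) := by
    constructor; rintro a ⟨-, h⟩; exact h rfl
  haveI : IsStrictOrder (Fin n →₀ ℕ) (fun a b => σ.le a b ∧ a ≠ b) := ⟨⟩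
  rw [RelEmbedding.wellFounded_iff_isEmpty]
  constructor
  intro e
  obtain ⟨i, j, hij, hle⟩ := (wellQuasiOrdered_le (α := Fin n →₀ ℕ)) e
  have h1 : σ.le (e j) (e i) ∧ e j ≠ e i := e.map_rel_iff.mpr hij
  exact h1.2 (σ.le_antisymm _ _ h1.1 (σ.le_of_le hle))

end TermOrder


section GBAux

open MvPolynomial

variable {K : Type*} [Field K] {n s : ℕ}

/-- `m` is reducible with respect to the set `S`. -/
def RedM (σ : TermOrder n) (S : Set (MvPolynomial (Fin n) K)) (m : Fin n →₀ ℕ) : Prop :=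
  ∃ p ∈ S, p ≠ 0 ∧ ∃ mp, σ.IsLeadingTerm p mp ∧ mp ≤ m

lemma mem_support_add' {p q : MvPolynomial (Fin n) K} {m} (h : m ∈ (p + q).support) :
    m ∈ p.support ∨ m ∈ q.support := by
  by_contra hc
  push_neg at hc
  have h1 := MvPolynomial.notMem_support_iff.mp hc.1
  have h2 := MvPolynomial.notMem_support_iff.mp hc.2
  exact MvPolynomial.mem_support_iff.mp h (by rw [MvPolynomial.coeff_add, h1, h2, add_zero])

lemma mem_support_sub' {p q : MvPolynomial (Fin n) K} {m} (h : m ∈ (p - q).support) :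
    m ∈ p.support ∨ m ∈ q.support := by
  by_contra hc
  push_neg at hc
  have h1 := MvPolynomial.notMem_support_iff.mp hc.1
  have h2 := MvPolynomial.notMem_support_iff.mp hc.2
  exact MvPolynomial.mem_support_iff.mp h (by rw [MvPolynomial.coeff_sub, h1, h2, sub_zero])

lemma support_sub_lead {q : MvPolynomial (Fin n) K} {mq : Fin n →₀ ℕ} :
    ∀ m ∈ (q - MvPolynomial.monomial mq (MvPolynomial.coeff mq q)).support,
      m ∈ q.support ∧ m ≠ mq := by
  intro m hm
  have hco := MvPolynomial.mem_support_iff.mp hm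
  rw [MvPolynomial.coeff_sub, MvPolynomial.coeff_monomial] at hco
  by_cases h : mq = m
  · subst h; simp at hco
  · refine ⟨?_, fun hEq => h hEq.symm⟩
    rw [MvPolynomial.mem_support_iff]
    intro h0
    rw [h0] at hco
    simp [h] at hco

variable (z : Fin s → Fin n) (I : Ideal (MvPolynomial (Fin n) K))

lemma not_occurs_iff' {i : Fin n} {p : MvPolynomial (Fin n) K} :
    ¬ Occurs i p ↔ ∀ m ∈ p.support, m i = 0 := by
  simp [Occurs]

lemma elim_zero : (0 : MvPolynomial (Fin n) K) ∈ elimSet z I :=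
  ⟨I.zero_mem, fun _ => by simp [Occurs]⟩

lemma elim_add {p q : MvPolynomial (Fin n) K} (hp : p ∈ elimSet z I) (hq : q ∈ elimSet z I) :
    p + q ∈ elimSet z I := by
  refine ⟨I.add_mem hp.1 hq.1, fun i => not_occurs_iff'.mpr ?_⟩
  intro m hm
  rcases mem_support_add' hm with h | h
  · exact not_occurs_iff'.mp (hp.2 i) m h
  · exact not_occurs_iff'.mp (hq.2 i) m h

lemma elim_sub {p q : MvPolynomial (Fin n) K} (hp : p ∈ elimSet z I) (hq : q ∈ elimSet z I) :
    p - q ∈ elimSet z I := by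
  refine ⟨I.sub_mem hp.1 hq.1, fun i => not_occurs_iff'.mpr ?_⟩
  intro m hm
  rcases mem_support_sub' hm with h | h
  · exact not_occurs_iff'.mp (hp.2 i) m h
  · exact not_occurs_iff'.mp (hq.2 i) m h

lemma elim_smul (c : K) {p : MvPolynomial (Fin n) K} (hp : p ∈ elimSet z I) :
    c • p ∈ elimSet z I := by
  refine ⟨by rw [MvPolynomial.smul_eq_C_mul]; exact I.mul_mem_left _ hp.1,
    fun i => not_occurs_iff'.mpr ?_⟩
  intro m hm
  have hm' : m ∈ p.support := by
    rw [MvPolynomial.mem_support_iff] at hm ⊢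
    intro h0
    rw [MvPolynomial.coeff_smul, h0, smul_zero] at hm
    exact hm rfl
  exact not_occurs_iff'.mp (hp.2 i) m hm'

lemma elim_monomul {p : MvPolynomial (Fin n) K} {δ : Fin n →₀ ℕ} {c : K}
    (hp : p ∈ elimSet z I) (hδ : ∀ j, δ (z j) = 0) :
    MvPolynomial.monomial δ c * p ∈ elimSet z I := by
  classical
  refine ⟨I.mul_mem_left _ hp.1, fun i => not_occurs_iff'.mpr ?_⟩
  intro m hm
  have hm' := MvPolynomial.support_mul _ _ hm
  rw [Finset.mem_add] at hm'
  obtain ⟨a, ha, b, hb, rfl⟩ := hm'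
  have ha' : a = δ := by
    rw [MvPolynomial.support_monomial] at ha
    by_cases h : c = 0 <;> simp [h] at ha
    · exact ha
  subst ha'
  have hb' := not_occurs_iff'.mp (hp.2 i) b hb
  simp [Finsupp.add_apply, hδ i, hb']

lemma exists_nf (σ : TermOrder n) :
    ∀ M : Fin n →₀ ℕ, ∀ q : MvPolynomial (Fin n) K,
      (∀ m ∈ q.support, ∀ j, m (z j) = 0) → (∀ m ∈ q.support, σ.le m M) →
      ∃ r, q - r ∈ elimSet z I ∧ (∀ m ∈ r.support, σ.le m M) ∧
        ∀ m ∈ r.support, ¬ RedM σ (elimSet z I) m := by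
  intro M
  refine σ.wf.induction (C := fun M => ∀ q : MvPolynomial (Fin n) K,
      (∀ m ∈ q.support, ∀ j, m (z j) = 0) → (∀ m ∈ q.support, σ.le m M) →
      ∃ r, q - r ∈ elimSet z I ∧ (∀ m ∈ r.support, σ.le m M) ∧
        ∀ m ∈ r.support, ¬ RedM σ (elimSet z I) m) M ?_
  clear M
  intro M ih q hqz hqle
  by_cases hq0 : q = 0
  · exact ⟨0, by simpa [hq0] using elim_zero z I, by simp, by simp⟩
  obtain ⟨mq, hmq⟩ := σ.exists_isLeadingTerm q hq0
  by_cases hMq : mq = M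
  swap
  · have hlt : σ.le mq M ∧ mq ≠ M := ⟨hqle mq hmq.1, hMq⟩
    obtain ⟨r, h1, h2, h3⟩ := ih mq hlt q hqz (fun m hm => hmq.2 m hm)
    exact ⟨r, h1, fun m hm => σ.le_trans _ _ _ (h2 m hm) hlt.1, h3⟩
  subst hMq
  by_cases hred : RedM σ (elimSet z I) mq
  · obtain ⟨p', hp'S, hp'0, mp, hmp, hmple⟩ := hred
    classical
    set c := MvPolynomial.coeff mq q with hc
    set lc := MvPolynomial.coeff mp p' with hlc
    have hlc0 : lc ≠ 0 := MvPolynomial.mem_support_iff.mp hmp.1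
    set δ := mq - mp with hδdef
    have hδadd : δ + mp = mq := tsub_add_cancel_of_le hmple
    set u := MvPolynomial.monomial δ (c * lc⁻¹) * p' with hu
    have huS : u ∈ elimSet z I := elim_monomul z I hp'S (fun j => by
      rw [hδdef, Finsupp.tsub_apply, hqz mq hmq.1 j]
      simp)
    have hcu : MvPolynomial.coeff mq u = c := by
      rw [hu, ← hδadd, MvPolynomial.coeff_monomial_mul, ← hlc]
      field_simp
    have husup : ∀ m ∈ u.support, σ.le m mq ∧ (∀ j, m (z j) = 0) := by
      intro m hm
      have hm' := MvPolynomial.support_mul _ _ hm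
      rw [Finset.mem_add] at hm'
      obtain ⟨a, ha, b, hb, rfl⟩ := hm'
      have ha' : a = δ := by
        rw [MvPolynomial.support_monomial] at ha
        by_cases h : c * lc⁻¹ = 0 <;> simp [h] at ha
        · exact ha
      subst ha'
      constructor
      · have h1 := σ.add_le_add b mp δ (hmp.2 b hb)
        rw [add_comm b δ, add_comm mp δ] at h1
        rw [← hδadd]
        exact h1
      · intro j
        have hb' := not_occurs_iff'.mp (hp'S.2 j) b hb
        have hδz : δ (z j) = 0 := by
          rw [hδdef, Finsupp.tsub_apply, hqz mq hmq.1 j]; simp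
        simp [Finsupp.add_apply, hδz, hb']
    set q₂ := q - u with hq₂
    have hq₂mq : MvPolynomial.coeff mq q₂ = 0 := by
      rw [hq₂, MvPolynomial.coeff_sub, hcu, ← hc, sub_self]
    have hq₂sup : ∀ m ∈ q₂.support, (σ.le m mq ∧ m ≠ mq) ∧ ∀ j, m (z j) = 0 := by
      intro m hm
      have hne : m ≠ mq := by
        rintro rfl
        exact MvPolynomial.mem_support_iff.mp hm hq₂mq
      rcases mem_support_sub' hm with h | h
      · exact ⟨⟨hqle m h, hne⟩, hqz m h⟩
      · exact ⟨⟨(husup m h).1, hne⟩, (husup m h).2⟩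
    by_cases hq₂0 : q₂ = 0
    · refine ⟨0, ?_, by simp, by simp⟩
      have hqu : q = u := by
        have := sub_eq_zero.mp hq₂0
        exact this
      rw [sub_zero, hqu]
      exact huS
    · obtain ⟨m₂, hm₂⟩ := σ.exists_isLeadingTerm q₂ hq₂0
      have hm₂lt : σ.le m₂ mq ∧ m₂ ≠ mq := (hq₂sup m₂ hm₂.1).1
      obtain ⟨r, h1, h2, h3⟩ := ih m₂ hm₂lt q₂ (fun m hm => (hq₂sup m hm).2)
        (fun m hm => hm₂.2 m hm)
      refine ⟨r, ?_, fun m hm => σ.le_trans _ _ _ (h2 m hm) hm₂lt.1, h3⟩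
      have heq : q - r = u + (q₂ - r) := by rw [hq₂]; ring
      rw [heq]
      exact elim_add z I huS h1
  · classical
    set c := MvPolynomial.coeff mq q with hc
    set tl := q - MvPolynomial.monomial mq c with htl
    by_cases htl0 : tl = 0
    · have hqmono : q = MvPolynomial.monomial mq c := by
        have := sub_eq_zero.mp htl0
        exact this
      refine ⟨q, by simpa using elim_zero z I, hqle, ?_⟩
      intro m hm
      have hm' : m = mq := by
        rw [hqmono, MvPolynomial.support_monomial] at hm
        by_cases h : c = 0 <;> simp [h] at hm
        · exact hm
      rw [hm']
      exact hred
    · obtain ⟨m₂, hm₂⟩ := σ.exists_isLeadingTerm tl htl0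
      have hsub := support_sub_lead (q := q) (mq := mq)
      have hm₂lt : σ.le m₂ mq ∧ m₂ ≠ mq :=
        ⟨hqle m₂ (hsub m₂ hm₂.1).1, (hsub m₂ hm₂.1).2⟩
      obtain ⟨r', h1, h2, h3⟩ := ih m₂ hm₂lt tl
        (fun m hm j => hqz m (hsub m hm).1 j) (fun m hm => hm₂.2 m hm)
      refine ⟨MvPolynomial.monomial mq c + r', ?_, ?_, ?_⟩
      · have heq : q - (MvPolynomial.monomial mq c + r') = tl - r' := by rw [htl]; ring
        rw [heq]
        exact h1
      · intro m hm
        rcases mem_support_add' hm with hm' | hm'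
        · have : m = mq := by
            rw [MvPolynomial.support_monomial] at hm'
            by_cases h : c = 0 <;> simp [h] at hm'
            · exact hm'
          rw [this]; exact σ.le_refl mq
        · exact σ.le_trans _ _ _ (h2 m hm') hm₂lt.1
      · intro m hm
        rcases mem_support_add' hm with hm' | hm'
        · have : m = mq := by
            rw [MvPolynomial.support_monomial] at hm'
            by_cases h : c = 0 <;> simp [h] at hm'
            · exact hm'
          rw [this]; exact hred
        · exact h3 m hm'

end GBAux

section RGBAux

open MvPolynomial

variable {K : Type*} [Field K] {n s : ℕ}
variable (z : Fin s → Fin n) (I : Ideal (MvPolynomial (Fin n) K))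

lemma exists_reducedGB (σ : TermOrder n) :
    ∃ (t : ℕ) (g : Fin t → MvPolynomial (Fin n) K),
      IsReducedGBOn σ (elimSet z I) (Set.range g) ∧
      ∀ (p : MvPolynomial (Fin n) K), p ∈ elimSet z I → p ≠ 0 →
        ∃ i mg mp, σ.IsLeadingTerm (g i) mg ∧ σ.IsLeadingTerm p mp ∧ mg ≤ mp := by
  classical
  set S := elimSet z I with hSdef
  set L : Set (Fin n →₀ ℕ) := {m | ∃ p ∈ S, p ≠ 0 ∧ σ.IsLeadingTerm p m} with hLdef
  set Mn : Set (Fin n →₀ ℕ) := {m | m ∈ L ∧ ∀ m' ∈ L, m' ≤ m → m' = m} with hMndef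
  have hanti : IsAntichain (· ≤ ·) Mn := by
    rintro a ha b hb hab hle
    exact hab (hb.2 a ha.1 hle)
  have hfin : Mn.Finite := hanti.finite_of_partiallyWellOrderedOn (Set.isPWO_of_wellQuasiOrderedLE Mn)
  have hmin : ∀ mf ∈ L, ∃ m ∈ Mn, m ≤ mf := by
    intro mf hmf
    obtain ⟨m, hmT, hminT⟩ := σ.wf.has_min {m | m ∈ L ∧ m ≤ mf} ⟨mf, hmf, le_refl mf⟩
    refine ⟨m, ⟨hmT.1, ?_⟩, hmT.2⟩
    intro m' hm' hle
    by_contra hne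
    exact hminT m' ⟨hm', le_trans hle hmT.2⟩ ⟨σ.le_of_le hle, hne⟩
  have hgex : ∀ m ∈ Mn, ∃ g : MvPolynomial (Fin n) K, g ∈ S ∧ σ.IsLeadingTerm g m ∧
      MvPolynomial.coeff m g = 1 ∧ ∀ m' ∈ g.support, m' ≠ m → ¬ RedM σ S m' := by
    intro m hm
    obtain ⟨p, hpS, hp0, hplt⟩ := hm.1
    set c := MvPolynomial.coeff m p with hcdef
    have hc0 : c ≠ 0 := MvPolynomial.mem_support_iff.mp hplt.1
    set tl := p - MvPolynomial.monomial m c with htldef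
    have hsub : ∀ m' ∈ tl.support, m' ∈ p.support ∧ m' ≠ m := support_sub_lead
    obtain ⟨r, h1, h2, h3⟩ := exists_nf z I σ m tl
      (fun m' hm' j => not_occurs_iff'.mp (hpS.2 j) m' (hsub m' hm').1)
      (fun m' hm' => hplt.2 m' (hsub m' hm').1)
    have hmr : MvPolynomial.coeff m r = 0 := by
      rw [← MvPolynomial.notMem_support_iff]
      exact fun hmem => h3 m hmem ⟨p, hpS, hp0, m, hplt, le_refl m⟩
    set g := c⁻¹ • (MvPolynomial.monomial m c + r) with hgdef
    have hgS : g ∈ S := by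
      have h4 : MvPolynomial.monomial m c + r ∈ S := by
        have heq : MvPolynomial.monomial m c + r = p - (tl - r) := by rw [htldef]; ring
        rw [heq]
        exact elim_sub z I hpS h1
      exact elim_smul z I _ h4
    have hcoeffg : ∀ m', MvPolynomial.coeff m' g =
        c⁻¹ * (MvPolynomial.coeff m' (MvPolynomial.monomial m c) + MvPolynomial.coeff m' r) := by
      intro m'
      rw [hgdef, MvPolynomial.coeff_smul, MvPolynomial.coeff_add]
      simp [smul_eq_mul]
    have hgm : MvPolynomial.coeff m g = 1 := by
      rw [hcoeffg, MvPolynomial.coeff_monomial, hmr]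
      simp [hc0]
    have hgsup : ∀ m' ∈ g.support, m' = m ∨ m' ∈ r.support := by
      intro m' hm'
      by_contra hcon
      push_neg at hcon
      have hr0 : MvPolynomial.coeff m' r = 0 := MvPolynomial.notMem_support_iff.mp hcon.2
      have hmono : MvPolynomial.coeff m' (MvPolynomial.monomial m c) = 0 := by
        rw [MvPolynomial.coeff_monomial, if_neg (fun h => hcon.1 h.symm)]
      exact MvPolynomial.mem_support_iff.mp hm' (by rw [hcoeffg, hr0, hmono]; simp)
    refine ⟨g, hgS, ⟨MvPolynomial.mem_support_iff.mpr (by rw [hgm]; exact one_ne_zero), ?_⟩,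
      hgm, ?_⟩
    · intro m' hm'
      rcases hgsup m' hm' with rfl | hm''
      · exact σ.le_refl m'
      · exact h2 m' hm''
    · intro m' hm' hne
      rcases hgsup m' hm' with rfl | hm''
      · exact absurd rfl hne
      · exact h3 m' hm''
  set F := hfin.toFinset with hF
  have hgex' : ∀ m : F, ∃ g : MvPolynomial (Fin n) K, g ∈ S ∧ σ.IsLeadingTerm g m.1 ∧
      MvPolynomial.coeff m.1 g = 1 ∧ ∀ m' ∈ g.support, m' ≠ m.1 → ¬ RedM σ S m' :=
    fun m => hgex m.1 (hfin.mem_toFinset.mp m.2)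
  choose gOf hg1 hg2 hg3 hg4 using hgex'
  have hgne : ∀ m : F, gOf m ≠ 0 := fun m =>
    MvPolynomial.ne_zero_iff.mpr ⟨m.1, MvPolynomial.mem_support_iff.mp (hg2 m).1⟩
  refine ⟨F.card, fun i => gOf (F.equivFin.symm i), ?_⟩
  have hrange : Set.range (fun i => gOf (F.equivFin.symm i)) = Set.range gOf := by
    rw [show (fun i => gOf (F.equivFin.symm i)) = gOf ∘ F.equivFin.symm from rfl,
      Set.range_comp, Equiv.range_eq_univ, Set.image_univ]
  have hGB2 : ∀ (p : MvPolynomial (Fin n) K), p ∈ S → p ≠ 0 →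
      ∃ mF : F, ∃ mg mp, σ.IsLeadingTerm (gOf mF) mg ∧ σ.IsLeadingTerm p mp ∧ mg ≤ mp := by
    intro p hpS hp0
    obtain ⟨mp, hmp⟩ := σ.exists_isLeadingTerm p hp0
    have hmpL : mp ∈ L := ⟨p, hpS, hp0, hmp⟩
    obtain ⟨m, hmMn, hmle⟩ := hmin mp hmpL
    exact ⟨⟨m, hfin.mem_toFinset.mpr hmMn⟩, m, mp, hg2 _, hmp, hmle⟩
  constructor
  · rw [hrange]
    refine ⟨⟨fun x hx => ?_, fun p hpS hp0 => ?_⟩, fun x hx => ?_, ?_⟩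
    · obtain ⟨m, rfl⟩ := hx
      exact hg1 m
    · obtain ⟨mF, mg, mp, hltg, hltp, hle⟩ := hGB2 p hpS hp0
      exact ⟨gOf mF, ⟨mF, rfl⟩, mg, mp, hltg, hltp, hle⟩
    · obtain ⟨m, rfl⟩ := hx
      exact ⟨m.1, hg2 m, hg3 m⟩
    · intro gg hgg m₀ hm₀ gg' hgg' m' hm'LT hle'
      obtain ⟨m1, rfl⟩ := hgg
      obtain ⟨m2, rfl⟩ := hgg'
      have hm'eq : m' = m2.1 := σ.isLeadingTerm_unique hm'LT (hg2 m2)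
      by_cases h0 : m₀ = m1.1
      · have hm2L : (m2.1 : Fin n →₀ ℕ) ∈ L := ⟨gOf m2, hg1 m2, hgne m2, hg2 m2⟩
        have hm1Mn : m1.1 ∈ Mn := hfin.mem_toFinset.mp m1.2
        have heqm : m2.1 = m1.1 := hm1Mn.2 m2.1 hm2L (by rw [← hm'eq, ← h0]; exact hle')
        have hm12 : m2 = m1 := Subtype.ext heqm
        exact ⟨by rw [hm12], by rw [hm'eq, heqm, h0]⟩
      · exfalso
        refine hg4 m1 m₀ hm₀ h0 ⟨gOf m2, hg1 m2, hgne m2, m2.1, hg2 m2, ?_⟩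
        rw [← hm'eq]
        exact hle'
  · intro p hpS hp0
    obtain ⟨mF, mg, mp, hltg, hltp, hle⟩ := hGB2 p hpS hp0
    exact ⟨F.equivFin mF, mg, mp, by simpa using hltg, hltp, hle⟩

end RGBAux

section SubstAux

open MvPolynomial

variable {K : Type*} [Field K] {n s : ℕ}
variable (σ : TermOrder n) (z : Fin s → Fin n) (f : Fin s → MvPolynomial (Fin n) K)

lemma tail_coeff_single {f0 : MvPolynomial (Fin n) K} {zv : Fin n}
    (hc : MvPolynomial.coeff (Finsupp.single zv 1) f0 ≠ 0) :
    MvPolynomial.coeff (Finsupp.single zv 1) (tailTo f0 zv) = 0 := by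
  classical
  rw [tailTo, MvPolynomial.coeff_sub, MvPolynomial.coeff_smul, MvPolynomial.coeff_X' zv,
    if_pos rfl]
  field_simp
  simp [hc]

lemma tail_support_cases {f0 : MvPolynomial (Fin n) K} {zv : Fin n} {m : Fin n →₀ ℕ}
    (hm : m ∈ (tailTo f0 zv).support) : m = Finsupp.single zv 1 ∨ m ∈ f0.support := by
  classical
  have hco := MvPolynomial.mem_support_iff.mp hm
  rw [tailTo, MvPolynomial.coeff_sub, MvPolynomial.coeff_smul, MvPolynomial.coeff_X' zv] at hco
  by_cases h : Finsupp.single zv 1 = m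
  · exact Or.inl h.symm
  · rw [if_neg h] at hco
    refine Or.inr (MvPolynomial.mem_support_iff.mpr fun h0 => hco ?_)
    rw [h0]
    simp

lemma subMap_bound (hcs : CoherentlySeparating z f)
    (hlt : ∀ i, σ.IsLeadingTerm (f i) (Finsupp.single (z i) 1)) (i : Fin n) :
    ∀ m' ∈ (subMap z f i).support,
      σ.le m' (Finsupp.single i 1) ∧ ((∃ j, z j = i) → m' ≠ Finsupp.single i 1) := by
  intro m' hm'
  by_cases h : ∃ j, z j = i
  · rw [subMap, dif_pos h] at hm'
    have hj : z h.choose = i := h.choose_spec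
    have hc : MvPolynomial.coeff (Finsupp.single (z h.choose) 1) (f h.choose) ≠ 0 :=
      (hcs.2.1 h.choose).2.1
    have hne : m' ≠ Finsupp.single (z h.choose) 1 := by
      intro hEq
      rw [hEq] at hm'
      exact MvPolynomial.mem_support_iff.mp hm' (tail_coeff_single hc)
    rcases tail_support_cases hm' with hEq | hmem
    · exact absurd hEq hne
    · refine ⟨?_, fun _ => by rw [← hj]; exact hne⟩
      rw [← hj]
      exact (hlt h.choose).2 m' hmem
  · rw [subMap, dif_neg h, MvPolynomial.support_X] at hm'
    have : m' = Finsupp.single i 1 := by simpa using hm'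
    subst this
    exact ⟨σ.le_refl _, fun hex => absurd hex h⟩

lemma pow_bound (hcs : CoherentlySeparating z f)
    (hlt : ∀ i, σ.IsLeadingTerm (f i) (Finsupp.single (z i) 1)) (i : Fin n) (k : ℕ) :
    ∀ m' ∈ ((subMap z f i) ^ k).support,
      σ.le m' (Finsupp.single i k) ∧ (k ≠ 0 → (∃ j, z j = i) → m' ≠ Finsupp.single i k) := by
  classical
  induction k with
  | zero =>
    intro m' hm'
    rw [pow_zero] at hm'
    have : m' = 0 := by
      have hco := MvPolynomial.mem_support_iff.mp hm'
      rw [MvPolynomial.coeff_one] at hco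
      by_cases h0 : (0 : Fin n →₀ ℕ) = m'
      · exact h0.symm
      · rw [if_neg h0] at hco; exact absurd rfl hco
    subst this
    simp only [Finsupp.single_zero]
    exact ⟨σ.le_refl _, fun h0 _ => absurd rfl h0⟩
  | succ k ih =>
    intro m' hm'
    rw [pow_succ] at hm'
    have hm'' := MvPolynomial.support_mul _ _ hm'
    rw [Finset.mem_add] at hm''
    obtain ⟨a, ha, b, hb, rfl⟩ := hm''
    have hA := ih a ha
    have hB := subMap_bound σ z f hcs hlt i b hb
    have hsum : Finsupp.single i (k + 1) = Finsupp.single i k + Finsupp.single i 1 := by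
      rw [← Finsupp.single_add]
    constructor
    · rw [hsum]
      exact σ.add_le_add' hA.1 hB.1
    · intro _ hex hEq
      rw [hsum] at hEq
      have := σ.eq_of_add_eq hA.1 hB.1 hEq
      exact hB.2 hex this.2

lemma prod_bound (hcs : CoherentlySeparating z f)
    (hlt : ∀ i, σ.IsLeadingTerm (f i) (Finsupp.single (z i) 1)) (t : Finset (Fin n))
    (k : Fin n → ℕ) :
    ∀ m' ∈ (∏ i ∈ t, (subMap z f i) ^ k i).support,
      σ.le m' (∑ i ∈ t, Finsupp.single i (k i)) ∧
        ((∃ i ∈ t, k i ≠ 0 ∧ ∃ j, z j = i) → m' ≠ ∑ i ∈ t, Finsupp.single i (k i)) := by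
  classical
  induction t using Finset.cons_induction with
  | empty =>
    intro m' hm'
    rw [Finset.prod_empty] at hm'
    have : m' = 0 := by
      have hco := MvPolynomial.mem_support_iff.mp hm'
      rw [MvPolynomial.coeff_one] at hco
      by_cases h0 : (0 : Fin n →₀ ℕ) = m'
      · exact h0.symm
      · rw [if_neg h0] at hco; exact absurd rfl hco
    subst this
    simp only [Finset.sum_empty]
    exact ⟨σ.le_refl _, fun h => by simp at h⟩
  | cons a t ha ih =>
    intro m' hm'
    rw [Finset.prod_cons] at hm'
    have hm'' := MvPolynomial.support_mul _ _ hm'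
    rw [Finset.mem_add] at hm''
    obtain ⟨x, hx, y, hy, rfl⟩ := hm''
    have hX := pow_bound σ z f hcs hlt a (k a) x hx
    have hY := ih y hy
    rw [Finset.sum_cons]
    constructor
    · exact σ.add_le_add' hX.1 hY.1
    · rintro ⟨i, hi, hki, hzi⟩ hEq
      have heq2 := σ.eq_of_add_eq hX.1 hY.1 hEq
      rcases Finset.mem_cons.mp hi with rfl | hi'
      · exact hX.2 hki hzi heq2.1
      · exact hY.2 ⟨i, hi', hki, hzi⟩ heq2.2

lemma aeval_subMap_monomial_zfree (m : Fin n →₀ ℕ) (c : K) (hm : ∀ j, m (z j) = 0) :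
    MvPolynomial.aeval (subMap z f) (MvPolynomial.monomial m c) = MvPolynomial.monomial m c := by
  rw [MvPolynomial.aeval_monomial, MvPolynomial.monomial_eq, MvPolynomial.algebraMap_eq]
  congr 1
  refine Finsupp.prod_congr fun i hi => ?_
  have hne : ¬ ∃ j, z j = i := by
    rintro ⟨j, rfl⟩
    exact Finsupp.mem_support_iff.mp hi (hm j)
  rw [subMap, dif_neg hne]

lemma image_monomial_bound (hcs : CoherentlySeparating z f)
    (hlt : ∀ i, σ.IsLeadingTerm (f i) (Finsupp.single (z i) 1)) (m : Fin n →₀ ℕ) (c : K) :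
    ∀ m' ∈ (MvPolynomial.aeval (subMap z f) (MvPolynomial.monomial m c)).support,
      σ.le m' m ∧ ((∃ j, m (z j) ≠ 0) → m' ≠ m) := by
  intro m' hm'
  rw [MvPolynomial.aeval_monomial] at hm'
  have hm'' : m' ∈ (m.prod fun i k => subMap z f i ^ k).support := by
    rw [MvPolynomial.mem_support_iff] at hm' ⊢
    intro h0
    rw [MvPolynomial.algebraMap_eq, MvPolynomial.coeff_C_mul, h0, mul_zero] at hm'
    exact hm' rfl
  have hprodsupp : m' ∈ (∏ i ∈ m.support, (subMap z f i) ^ m i).support := hm''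
  have hsum : (∑ i ∈ m.support, Finsupp.single i (m i)) = m := Finsupp.sum_single m
  have hb := prod_bound σ z f hcs hlt m.support m m' hprodsupp
  rw [hsum] at hb
  refine ⟨hb.1, fun ⟨j, hj⟩ => hb.2 ⟨z j, Finsupp.mem_support_iff.mpr hj, hj, j, rfl⟩⟩

lemma image_props (hcs : CoherentlySeparating z f)
    (hlt : ∀ i, σ.IsLeadingTerm (f i) (Finsupp.single (z i) 1))
    (q : MvPolynomial (Fin n) K) (mf : Fin n →₀ ℕ) (hmf : σ.IsLeadingTerm q mf)
    (hmfz : ∀ j, mf (z j) = 0) :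
    MvPolynomial.coeff mf (MvPolynomial.aeval (subMap z f) q) = MvPolynomial.coeff mf q ∧
    ∀ m' ∈ (MvPolynomial.aeval (subMap z f) q).support, σ.le m' mf := by
  classical
  have hdecomp : MvPolynomial.aeval (subMap z f) q =
      ∑ m ∈ q.support, MvPolynomial.aeval (subMap z f)
        (MvPolynomial.monomial m (MvPolynomial.coeff m q)) := by
    conv_lhs => rw [← MvPolynomial.support_sum_monomial_coeff q]
    rw [map_sum]
  constructor
  · rw [hdecomp, MvPolynomial.coeff_sum]
    rw [Finset.sum_eq_single mf]
    · rw [aeval_subMap_monomial_zfree z f mf _ hmfz, MvPolynomial.coeff_monomial, if_pos rfl]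
    · intro m hm hne
      by_cases hz : ∃ j, m (z j) ≠ 0
      · rw [← MvPolynomial.notMem_support_iff]
        intro hmem
        have hbd := image_monomial_bound σ z f hcs hlt m _ mf hmem
        exact hne (σ.le_antisymm _ _ (hmf.2 m hm) hbd.1)
      · push_neg at hz
        rw [aeval_subMap_monomial_zfree z f m _ hz, MvPolynomial.coeff_monomial, if_neg hne]
    · intro h
      exact absurd hmf.1 h
  · intro m' hm'
    rw [hdecomp] at hm'
    have hex : ∃ m ∈ q.support, m' ∈ (MvPolynomial.aeval (subMap z f)
        (MvPolynomial.monomial m (MvPolynomial.coeff m q))).support := by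
      by_contra h
      push_neg at h
      refine MvPolynomial.mem_support_iff.mp hm' ?_
      rw [MvPolynomial.coeff_sum]
      exact Finset.sum_eq_zero fun m hm => MvPolynomial.notMem_support_iff.mp (h m hm)
    obtain ⟨m, hm, hm'mem⟩ := hex
    by_cases hz : ∃ j, m (z j) ≠ 0
    · exact σ.le_trans _ _ _ (image_monomial_bound σ z f hcs hlt m _ m' hm'mem).1 (hmf.2 m hm)
    · push_neg at hz
      rw [aeval_subMap_monomial_zfree z f m _ hz, MvPolynomial.support_monomial] at hm'mem
      have hmm : m' = m := by
        by_cases h0 : MvPolynomial.coeff m q = 0 <;> simp [h0] at hm'mem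
        · exact hm'mem
      rw [hmm]
      exact hmf.2 m hm

lemma image_zfree (hcs : CoherentlySeparating z f) (q : MvPolynomial (Fin n) K) :
    ∀ j₀, ¬ Occurs (z j₀) (MvPolynomial.aeval (subMap z f) q) := by
  classical
  rintro j₀ ⟨m, hm, hmz⟩
  have hv : z j₀ ∈ (MvPolynomial.aeval (subMap z f) q).vars :=
    (MvPolynomial.mem_vars _).mpr ⟨m, hm, Finsupp.mem_support_iff.mpr hmz⟩
  rw [MvPolynomial.aeval_eq_bind₁] at hv
  obtain ⟨i, hi, hji⟩ := MvPolynomial.mem_vars_bind₁ _ _ hv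
  by_cases h : ∃ j, z j = i
  · rw [subMap, dif_pos h] at hji
    have hj : z h.choose = i := h.choose_spec
    obtain ⟨d, hd, hdz⟩ := (MvPolynomial.mem_vars _).mp hji
    have hdz' : d (z j₀) ≠ 0 := Finsupp.mem_support_iff.mp hdz
    by_cases hjj : j₀ = h.choose
    · exact (hcs.2.1 h.choose).2.2 ⟨d, hd, by rw [← hjj]; exact hdz'⟩
    · rcases tail_support_cases hd with rfl | hd'
      · have hne : z h.choose ≠ z j₀ := fun hEq => hjj (hcs.1 hEq.symm)
        rw [Finsupp.single_apply, if_neg hne] at hdz'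
        exact hdz' rfl
      · exact hcs.2.2 j₀ h.choose (fun hEq => hjj hEq.symm) ⟨d, hd', hdz'⟩
  · rw [subMap, dif_neg h, MvPolynomial.vars_X] at hji
    exact h ⟨j₀, by simpa using hji⟩

lemma sub_aeval_mem (g : Fin n → MvPolynomial (Fin n) K) (p : MvPolynomial (Fin n) K) :
    p - MvPolynomial.aeval g p ∈
      Ideal.span (Set.range fun i => (MvPolynomial.X i : MvPolynomial (Fin n) K) - g i) := by
  induction p using MvPolynomial.induction_on with
  | C a =>
    rw [MvPolynomial.aeval_C, MvPolynomial.algebraMap_eq, sub_self]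
    exact Ideal.zero_mem _
  | add p q hp hq =>
    rw [map_add]
    have heq : p + q - (MvPolynomial.aeval g p + MvPolynomial.aeval g q) =
        (p - MvPolynomial.aeval g p) + (q - MvPolynomial.aeval g q) := by ring
    rw [heq]
    exact Ideal.add_mem _ hp hq
  | mul_X p i hp =>
    rw [map_mul, MvPolynomial.aeval_X]
    have heq : p * MvPolynomial.X i - MvPolynomial.aeval g p * g i =
        p * (MvPolynomial.X i - g i) + g i * (p - MvPolynomial.aeval g p) := by ring
    rw [heq]
    exact Ideal.add_mem _ (Ideal.mul_mem_left _ _ (Ideal.subset_span ⟨i, rfl⟩))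
      (Ideal.mul_mem_left _ _ hp)

end SubstAux

/-- If a proper ideal `I` contains a coherently `Z`-separating tuple
`(f_1,...,f_s)` and `LT_σ(f_i) = z_i`, then `I` has a `σ`-Gröbner basis
`{(1/c_1)f_1,...,(1/c_s)f_s, g_1,...,g_t}`, where `{g_1,...,g_t}` is the reduced
Gröbner basis of the elimination ideal `I ∩ K[X∖Z]`. -/
theorem statement8 (z : Fin s → Fin n) (f : Fin s → MvPolynomial (Fin n) K)
    (I : Ideal (MvPolynomial (Fin n) K)) (hI : I ≠ ⊤)
    (hfI : ∀ i, f i ∈ I ∧ f i ≠ 0)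
    (hcs : CoherentlySeparating z f) (σ : TermOrder n)
    (hlt : ∀ i, σ.IsLeadingTerm (f i) (Finsupp.single (z i) 1)) :
    ∃ (t : ℕ) (g : Fin t → MvPolynomial (Fin n) K),
      IsReducedGBOn σ (elimSet z I) (Set.range g) ∧
      IsGBOn σ (I : Set (MvPolynomial (Fin n) K))
        ((Set.range fun i =>
          (MvPolynomial.coeff (Finsupp.single (z i) 1) (f i))⁻¹ • f i) ∪
          Set.range g) := by
  obtain ⟨t, g, hRGB, hGB2⟩ := exists_reducedGB z I σ
  refine ⟨t, g, hRGB, ?_, ?_⟩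
  · rintro x (⟨i, rfl⟩ | hx)
    · show (MvPolynomial.coeff (Finsupp.single (z i) 1) (f i))⁻¹ • f i ∈ (I : Set _)
      rw [MvPolynomial.smul_eq_C_mul]
      exact SetLike.mem_coe.mpr (I.mul_mem_left _ (hfI i).1)
    · exact SetLike.mem_coe.mpr (hRGB.1.1 hx).1
  · intro p hpI hp0
    obtain ⟨mp, hmp⟩ := σ.exists_isLeadingTerm p hp0
    by_cases hz : ∃ i, mp (z i) ≠ 0
    · obtain ⟨i, hi⟩ := hz
      have hc0 : MvPolynomial.coeff (Finsupp.single (z i) 1) (f i) ≠ 0 := (hcs.2.1 i).2.1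
      refine ⟨(MvPolynomial.coeff (Finsupp.single (z i) 1) (f i))⁻¹ • f i,
        Or.inl ⟨i, rfl⟩, Finsupp.single (z i) 1, mp, ?_, hmp, ?_⟩
      · have hsupp : ∀ m, m ∈ ((MvPolynomial.coeff (Finsupp.single (z i) 1) (f i))⁻¹ •
            f i).support ↔ m ∈ (f i).support := by
          intro m
          simp only [MvPolynomial.mem_support_iff, MvPolynomial.coeff_smul, smul_eq_mul]
          constructor
          · intro h h0
            exact h (by rw [h0, mul_zero])
          · intro h
            exact mul_ne_zero (inv_ne_zero hc0) h
        exact ⟨(hsupp _).mpr (hlt i).1, fun m' hm' => (hlt i).2 m' ((hsupp m').mp hm')⟩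
      · rw [Finsupp.single_le_iff]
        exact Nat.one_le_iff_ne_zero.mpr hi
    · push_neg at hz
      set p' := MvPolynomial.aeval (subMap z f) p with hp'def
      have hmem : p - p' ∈ I := by
        refine Ideal.span_le.mpr ?_ (sub_aeval_mem (subMap z f) p)
        rintro x ⟨i, rfl⟩
        show MvPolynomial.X i - subMap z f i ∈ (I : Set _)
        by_cases h : ∃ j, z j = i
        · rw [subMap, dif_pos h]
          have hx : MvPolynomial.X i - tailTo (f h.choose) (z h.choose) =
              MvPolynomial.C (MvPolynomial.coeff (Finsupp.single (z h.choose) 1)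
                (f h.choose))⁻¹ * f h.choose := by
            rw [tailTo, MvPolynomial.smul_eq_C_mul, h.choose_spec]
            ring
          rw [hx]
          exact SetLike.mem_coe.mpr (I.mul_mem_left _ (hfI h.choose).1)
        · rw [subMap, dif_neg h, sub_self]
          exact SetLike.mem_coe.mpr I.zero_mem
      have hp'I : p' ∈ I := by
        have heq : p' = p - (p - p') := by ring
        rw [heq]
        exact I.sub_mem hpI hmem
      have hp'S : p' ∈ elimSet z I := ⟨hp'I, fun i => image_zfree z f hcs p i⟩
      have hprops := image_props σ z f hcs hlt p mp hmp hz
      have hcmp : MvPolynomial.coeff mp p' ≠ 0 := by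
        rw [hp'def, hprops.1]
        exact MvPolynomial.mem_support_iff.mp hmp.1
      have hp'0 : p' ≠ 0 := fun h0 => hcmp (by rw [h0]; simp)
      have hp'lt : σ.IsLeadingTerm p' mp :=
        ⟨MvPolynomial.mem_support_iff.mpr hcmp, hprops.2⟩
      obtain ⟨i, mg, mp', hltg, hltp', hle⟩ := hGB2 p' hp'S hp'0
      have heq : mp' = mp := σ.isLeadingTerm_unique hltp' hp'lt
      exact ⟨g i, Or.inr ⟨i, rfl⟩, mg, mp, hltg, hmp, heq ▸ hle⟩
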